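/- arXiv:1303.2362 — 2 statements merged into one kernel-verified Lean document; each statement's English description precedes it below -/
import Mathlib

section
/- For any positive integers x, y, z, r, R, \rho, the power series expansion of 1/((1-q^x)(1-q^y)(1-q^z)(1-q^{rx+Ry+\rho z})) - 1/((1-q^{rx})(1-q^{Ry})(1-q^{\rho z})(1-q^{x+y+z})) has all coefficients nonnegative. -/
open PowerSeries

noncomputable def geomF (a : ℕ) : ℚ⟦X⟧ := PowerSeries.mk fun n => if a ∣ n then 1 else 0

lemma geomF_eq (a : ℕ) (ha : 0 < a) : (1 - (X : ℚ⟦X⟧) ^ a)⁻¹ = geomF a := by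
  rw [PowerSeries.inv_eq_iff_mul_eq_one]
  · ext n
    rw [mul_sub, mul_one, map_sub, PowerSeries.coeff_mul_X_pow', PowerSeries.coeff_one]
    simp only [geomF, PowerSeries.coeff_mk]
    rcases Nat.eq_zero_or_pos n with rfl | hn
    · simp [Nat.dvd_zero]
      omega
    · by_cases h : a ≤ n
      · have hd : a ∣ n ↔ a ∣ n - a := by
          constructor
          · intro hd; exact (Nat.dvd_sub hd dvd_rfl)
          · intro hd; have := Nat.dvd_add hd (dvd_refl a); rwa [Nat.sub_add_cancel h] at this
        rw [if_pos h]
        simp only [← hd, hn.ne', if_false, sub_self]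
      · have : ¬ a ∣ n := fun hd => h (Nat.le_of_dvd hn hd)
        simp [h, hn.ne', this]
  · simp only [map_sub, map_one, map_pow, PowerSeries.constantCoeff_X]
    simp [zero_pow ha.ne']

open Finset in
def quadS (a b c d n : ℕ) : Finset (ℕ × ℕ × ℕ × ℕ) :=
  (range (n+1) ×ˢ (range (n+1) ×ˢ (range (n+1) ×ˢ range (n+1)))).filter
    fun m => m.1 + m.2.1 + m.2.2.1 + m.2.2.2 = n ∧
      a ∣ m.1 ∧ b ∣ m.2.1 ∧ c ∣ m.2.2.1 ∧ d ∣ m.2.2.2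

open Finset in
lemma mem_quadS {a b c d n : ℕ} {m : ℕ × ℕ × ℕ × ℕ} :
    m ∈ quadS a b c d n ↔ m.1 + m.2.1 + m.2.2.1 + m.2.2.2 = n ∧
      a ∣ m.1 ∧ b ∣ m.2.1 ∧ c ∣ m.2.2.1 ∧ d ∣ m.2.2.2 := by
  unfold quadS
  simp only [mem_filter, mem_product, mem_range]
  constructor
  · tauto
  · intro h
    refine ⟨⟨?_, ?_, ?_⟩, h⟩ <;> omega

open Finset in
lemma coeff_geomF_four (a b c d n : ℕ) :
    PowerSeries.coeff n (geomF a * (geomF b * (geomF c * geomF d)))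
      = ((quadS a b c d n).card : ℚ) := by
  classical
  simp only [PowerSeries.coeff_mul, Finset.mul_sum, geomF, PowerSeries.coeff_mk]
  rw [Finset.sum_sigma', Finset.sum_sigma']
  have hstep : ∀ t ∈ ((antidiagonal n).sigma fun p => antidiagonal p.2).sigma
      fun q => antidiagonal q.snd.2,
      ((if a ∣ t.fst.fst.1 then (1:ℚ) else 0) *
        ((if b ∣ t.fst.snd.1 then 1 else 0) *
          ((if c ∣ t.snd.1 then 1 else 0) * if d ∣ t.snd.2 then 1 else 0)))
      = (if a ∣ t.fst.fst.1 ∧ b ∣ t.fst.snd.1 ∧ c ∣ t.snd.1 ∧ d ∣ t.snd.2 then (1:ℚ) else 0) := by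
    intro t _
    split_ifs <;> simp_all
  rw [Finset.sum_congr rfl hstep, Finset.sum_boole]
  norm_num
  apply Finset.card_nbij'
    (i := fun t => (t.fst.fst.1, t.fst.snd.1, t.snd.1, t.snd.2))
    (j := fun m => ⟨⟨(m.1, m.2.1 + m.2.2.1 + m.2.2.2), (m.2.1, m.2.2.1 + m.2.2.2)⟩,
      (m.2.2.1, m.2.2.2)⟩)
  case hi =>
    rintro ⟨⟨⟨p1, p2⟩, q1, q2⟩, s1, s2⟩ ht
    simp only [Finset.mem_coe, mem_filter, mem_sigma, HasAntidiagonal.mem_antidiagonal] at ht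
    rw [Finset.mem_coe, mem_quadS]
    exact ⟨by dsimp at ht ⊢; omega, ht.2⟩
  case hj =>
    rintro ⟨m1, m2, m3, m4⟩ hm
    rw [Finset.mem_coe, mem_quadS] at hm
    simp only [Finset.mem_coe, mem_filter, mem_sigma, HasAntidiagonal.mem_antidiagonal]
    exact ⟨⟨⟨by dsimp at hm ⊢; omega, by dsimp at hm ⊢; omega⟩, by dsimp⟩, hm.2⟩
  case left_inv =>
    rintro ⟨⟨⟨p1, p2⟩, q1, q2⟩, s1, s2⟩ ht
    simp only [Finset.mem_coe, mem_filter, mem_sigma, HasAntidiagonal.mem_antidiagonal] at ht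
    obtain ⟨⟨⟨h1, h2⟩, h3⟩, h4⟩ := ht
    dsimp at h1 h2 h3 ⊢
    obtain rfl : q2 = s1 + s2 := h3.symm
    obtain rfl : p2 = q1 + (s1 + s2) := h2.symm
    rw [add_assoc q1 s1 s2]
  case right_inv =>
    rintro ⟨m1, m2, m3, m4⟩ hm
    rfl
lemma min_helper (r R ρ d A B C : ℕ) (h : A = 0 ∨ B = 0 ∨ C = 0) :
    min (r*A+d) (min (R*B+d) (ρ*C+d)) = d := by
  apply le_antisymm
  · rcases h with h | h | h
    · calc min (r*A+d) (min (R*B+d) (ρ*C+d)) ≤ r*A+d := min_le_left _ _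
        _ = d := by rw [h, Nat.mul_zero, Nat.zero_add]
    · calc min (r*A+d) (min (R*B+d) (ρ*C+d)) ≤ R*B+d :=
          le_trans (min_le_right _ _) (min_le_left _ _)
        _ = d := by rw [h, Nat.mul_zero, Nat.zero_add]
    · calc min (r*A+d) (min (R*B+d) (ρ*C+d)) ≤ ρ*C+d :=
          le_trans (min_le_right _ _) (min_le_right _ _)
        _ = d := by rw [h, Nat.mul_zero, Nat.zero_add]
  · exact le_min (Nat.le_add_left d _) (le_min (Nat.le_add_left d _) (Nat.le_add_left d _))

def phi (x y z r R ρ : ℕ) (m : ℕ×ℕ×ℕ×ℕ) : ℕ×ℕ×ℕ×ℕ :=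
  (x*(r*(m.1/(r*x) - min (m.1/(r*x)) (min (m.2.1/(R*y)) (m.2.2.1/(ρ*z)))) + m.2.2.2/(x+y+z)),
   y*(R*(m.2.1/(R*y) - min (m.1/(r*x)) (min (m.2.1/(R*y)) (m.2.2.1/(ρ*z)))) + m.2.2.2/(x+y+z)),
   z*(ρ*(m.2.2.1/(ρ*z) - min (m.1/(r*x)) (min (m.2.1/(R*y)) (m.2.2.1/(ρ*z)))) + m.2.2.2/(x+y+z)),
   (r*x+R*y+ρ*z) * min (m.1/(r*x)) (min (m.2.1/(R*y)) (m.2.2.1/(ρ*z))))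

open Finset in
lemma quadS_card_le (x y z r R ρ n : ℕ) (hx : 0 < x) (hy : 0 < y) (hz : 0 < z)
    (hr : 0 < r) (hR : 0 < R) (hρ : 0 < ρ) :
    (quadS (r*x) (R*y) (ρ*z) (x+y+z) n).card ≤ (quadS x y z (r*x+R*y+ρ*z) n).card := by
  apply Finset.card_le_card_of_injOn (phi x y z r R ρ)
  · rintro ⟨n1, n2, n3, n4⟩ hm
    rw [Finset.mem_coe, mem_quadS] at hm
    obtain ⟨hs, h1, h2, h3, h4⟩ := hm
    dsimp at hs h1 h2 h3 h4
    rw [Finset.mem_coe, mem_quadS]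
    simp only [phi]
    set a := n1 / (r*x) with ha
    set b := n2 / (R*y) with hb
    set c := n3 / (ρ*z) with hc
    set d := n4 / (x+y+z) with hd
    set mm := min a (min b c) with hmm
    have e1 : r*x*a = n1 := Nat.mul_div_cancel' h1
    have e2 : R*y*b = n2 := Nat.mul_div_cancel' h2
    have e3 : ρ*z*c = n3 := Nat.mul_div_cancel' h3
    have e4 : (x+y+z)*d = n4 := Nat.mul_div_cancel' h4
    have hma : mm ≤ a := min_le_left _ _
    have hmb : mm ≤ b := le_trans (min_le_right _ _) (min_le_left _ _)
    have hmc : mm ≤ c := le_trans (min_le_right _ _) (min_le_right _ _)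
    refine ⟨?_, dvd_mul_right _ _, dvd_mul_right _ _, dvd_mul_right _ _, dvd_mul_right _ _⟩
    obtain ⟨A, hA⟩ : ∃ A, a = A + mm := ⟨a - mm, by omega⟩
    obtain ⟨B, hB⟩ : ∃ B, b = B + mm := ⟨b - mm, by omega⟩
    obtain ⟨C, hC⟩ : ∃ C, c = C + mm := ⟨c - mm, by omega⟩
    have sA : a - mm = A := by omega
    have sB : b - mm = B := by omega
    have sC : c - mm = C := by omega
    rw [sA, sB, sC]
    have key : x*(r*A+d) + y*(R*B+d) + z*(ρ*C+d) + (r*x+R*y+ρ*z)*mm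
        = r*x*(A+mm) + R*y*(B+mm) + ρ*z*(C+mm) + (x+y+z)*d := by ring
    rw [key, ← hA, ← hB, ← hC, e1, e2, e3, e4]
    exact hs
  · rintro ⟨n1, n2, n3, n4⟩ hm ⟨n1', n2', n3', n4'⟩ hm' heq
    rw [Finset.mem_coe, mem_quadS] at hm hm'
    obtain ⟨hs, h1, h2, h3, h4⟩ := hm
    obtain ⟨hs', h1', h2', h3', h4'⟩ := hm'
    dsimp at h1 h2 h3 h4 h1' h2' h3' h4'
    simp only [phi, Prod.mk.injEq] at heq
    obtain ⟨E1, E2, E3, E4⟩ := heq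
    set a := n1 / (r*x) with ha
    set b := n2 / (R*y) with hb
    set c := n3 / (ρ*z) with hc
    set d := n4 / (x+y+z) with hd
    set a' := n1' / (r*x) with ha'
    set b' := n2' / (R*y) with hb'
    set c' := n3' / (ρ*z) with hc'
    set d' := n4' / (x+y+z) with hd'
    set mm := min a (min b c) with hmm
    set mm' := min a' (min b' c') with hmm'
    have e1 : r*x*a = n1 := Nat.mul_div_cancel' h1
    have e2 : R*y*b = n2 := Nat.mul_div_cancel' h2
    have e3 : ρ*z*c = n3 := Nat.mul_div_cancel' h3
    have e4 : (x+y+z)*d = n4 := Nat.mul_div_cancel' h4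
    have e1' : r*x*a' = n1' := Nat.mul_div_cancel' h1'
    have e2' : R*y*b' = n2' := Nat.mul_div_cancel' h2'
    have e3' : ρ*z*c' = n3' := Nat.mul_div_cancel' h3'
    have e4' : (x+y+z)*d' = n4' := Nat.mul_div_cancel' h4'
    have hM : mm = mm' := Nat.eq_of_mul_eq_mul_left (by positivity) E4
    have K1 : r*(a-mm)+d = r*(a'-mm')+d' := Nat.eq_of_mul_eq_mul_left hx E1
    have K2 : R*(b-mm)+d = R*(b'-mm')+d' := Nat.eq_of_mul_eq_mul_left hy E2
    have K3 : ρ*(c-mm)+d = ρ*(c'-mm')+d' := Nat.eq_of_mul_eq_mul_left hz E3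
    have hD : d = d' := by
      have hz1 : a - mm = 0 ∨ b - mm = 0 ∨ c - mm = 0 := by omega
      have hz2 : a' - mm' = 0 ∨ b' - mm' = 0 ∨ c' - mm' = 0 := by omega
      rw [← min_helper r R ρ d (a-mm) (b-mm) (c-mm) hz1,
        ← min_helper r R ρ d' (a'-mm') (b'-mm') (c'-mm') hz2, K1, K2, K3]
    rw [← hM, ← hD] at K1 K2 K3
    have hA : a = a' := by
      have := Nat.eq_of_mul_eq_mul_left hr (Nat.add_right_cancel K1)
      have hma : mm ≤ a := min_le_left _ _
      have hma' : mm' ≤ a' := min_le_left _ _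
      omega
    have hB : b = b' := by
      have := Nat.eq_of_mul_eq_mul_left hR (Nat.add_right_cancel K2)
      have hmb : mm ≤ b := le_trans (min_le_right _ _) (min_le_left _ _)
      have hmb' : mm' ≤ b' := le_trans (min_le_right _ _) (min_le_left _ _)
      omega
    have hC : c = c' := by
      have := Nat.eq_of_mul_eq_mul_left hρ (Nat.add_right_cancel K3)
      have hmc : mm ≤ c := le_trans (min_le_right _ _) (min_le_right _ _)
      have hmc' : mm' ≤ c' := le_trans (min_le_right _ _) (min_le_right _ _)
      omega
    simp only [Prod.mk.injEq]
    refine ⟨?_, ?_, ?_, ?_⟩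
    · rw [← e1, ← e1', hA]
    · rw [← e2, ← e2', hB]
    · rw [← e3, ← e3', hC]
    · rw [← e4, ← e4', hD]

lemma prod_inv (a b c d : ℕ) (ha : 0 < a) (hb : 0 < b) (hc : 0 < c) (hd : 0 < d) :
    ((1 - (X : ℚ⟦X⟧) ^ a) * (1 - X ^ b) * (1 - X ^ c) * (1 - X ^ d))⁻¹
      = geomF a * (geomF b * (geomF c * geomF d)) := by
  rw [PowerSeries.mul_inv_rev, PowerSeries.mul_inv_rev, PowerSeries.mul_inv_rev,
    geomF_eq a ha, geomF_eq b hb, geomF_eq c hc, geomF_eq d hd]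
  ring

theorem dominant_xyz_L1 (x y z r R ρ : ℕ) (hx : 0 < x) (hy : 0 < y)
    (hz : 0 < z) (hr : 0 < r) (hR : 0 < R) (hρ : 0 < ρ) (n : ℕ) :
    0 ≤ PowerSeries.coeff n
      (((1 - (X : ℚ⟦X⟧) ^ x) * (1 - X ^ y) * (1 - X ^ z) *
          (1 - X ^ (r * x + R * y + ρ * z)))⁻¹ -
       ((1 - (X : ℚ⟦X⟧) ^ (r * x)) * (1 - X ^ (R * y)) * (1 - X ^ (ρ * z)) *
          (1 - X ^ (x + y + z)))⁻¹) := by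
  rw [prod_inv x y z _ hx hy hz (by positivity),
    prod_inv _ _ _ _ (by positivity) (by positivity) (by positivity) (by positivity),
    map_sub, coeff_geomF_four, coeff_geomF_four, sub_nonneg, Nat.cast_le]
  exact quadS_card_le x y z r R ρ n hx hy hz hr hR hρ
end

section
/- For all positive integers x, y, r, R, m, L and all i with 1 \leq i \leq L, the power series W(i) = q^{m(i-1)+x}(1-q^{(r-1)x})(1-q^{Ry})(1-q^{m(i-1)+y}) / [P(i) \cdot Q(L)/Q(i-1)] has nonnegative coefficients, where P(i) = (q^x,q^y,q^{rx+Ry};q^m)_i and Q(i) = (q^{rx},q^{Ry},q^{x+y};q^m)_i. -/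
open PowerSeries Finset

/-- Nonnegative coefficients predicate -/
def NN (f : ℚ⟦X⟧) : Prop := ∀ n, 0 ≤ PowerSeries.coeff (R := ℚ) n f

lemma NN.mul {f g : ℚ⟦X⟧} (hf : NN f) (hg : NN g) : NN (f * g) := by
  intro n
  rw [PowerSeries.coeff_mul]
  exact Finset.sum_nonneg fun p _ => mul_nonneg (hf p.1) (hg p.2)

lemma NN.one : NN 1 := by
  intro n; rw [PowerSeries.coeff_one]; positivity

lemma NN.prod {ι : Type*} (s : Finset ι) (f : ι → ℚ⟦X⟧) (h : ∀ l ∈ s, NN (f l)) :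
    NN (∏ l ∈ s, f l) := by
  classical
  induction s using Finset.induction_on with
  | empty => simpa using NN.one
  | insert _ _ hx ih =>
    rw [Finset.prod_insert hx]
    exact (h _ (Finset.mem_insert_self _ _)).mul
      (ih fun l hl => h l (Finset.mem_insert_of_mem hl))

lemma NN.X_pow (a : ℕ) : NN ((X : ℚ⟦X⟧) ^ a) := by
  intro n
  rw [PowerSeries.coeff_X_pow]
  split <;> norm_num

lemma NN.geom (a k : ℕ) : NN (∑ j ∈ range k, ((X : ℚ⟦X⟧) ^ a) ^ j) := by
  intro n
  rw [map_sum]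
  exact Finset.sum_nonneg fun j _ => by
    rw [← pow_mul]; exact NN.X_pow _ n

lemma constCoeff_one_sub (a : ℕ) (ha : 0 < a) :
    PowerSeries.constantCoeff (R := ℚ) (1 - (X : ℚ⟦X⟧) ^ a) = 1 := by
  simp [PowerSeries.constantCoeff_X, zero_pow ha.ne']

lemma inv_one_sub_eq (a : ℕ) (ha : 0 < a) :
    ((1 - (X : ℚ⟦X⟧) ^ a))⁻¹ =
      PowerSeries.mk (fun n => if a ∣ n then (1 : ℚ) else 0) := by
  rw [PowerSeries.inv_eq_iff_mul_eq_one (by rw [constCoeff_one_sub a ha]; norm_num)]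
  · ext n
    rw [mul_sub, mul_one, map_sub, PowerSeries.coeff_mul_X_pow']
    rcases Nat.eq_zero_or_pos n with rfl | hn
    · simp [ha.not_ge, Nat.dvd_zero]
    · rw [PowerSeries.coeff_mk, PowerSeries.coeff_one, if_neg hn.ne']
      by_cases h : a ∣ n
      · have hle : a ≤ n := Nat.le_of_dvd hn h
        rw [if_pos h, if_pos hle, PowerSeries.coeff_mk,
          if_pos ((Nat.dvd_sub h dvd_rfl))]
        ring
      · rw [if_neg h]
        by_cases hle : a ≤ n
        · rw [if_pos hle, PowerSeries.coeff_mk, if_neg, sub_zero]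
          intro hd
          have : a ∣ (n - a) + a := Nat.dvd_add hd dvd_rfl
          rw [Nat.sub_add_cancel hle] at this
          exact h this
        · rw [if_neg hle]; simp

lemma cancel_one_sub (a : ℕ) (ha : 0 < a) :
    (1 - (X : ℚ⟦X⟧) ^ a) * (1 - (X : ℚ⟦X⟧) ^ a)⁻¹ = 1 :=
  PowerSeries.mul_inv_cancel _ (by rw [constCoeff_one_sub a ha]; norm_num)

lemma NN.inv_one_sub (a : ℕ) (ha : 0 < a) : NN ((1 - (X : ℚ⟦X⟧) ^ a)⁻¹) := by
  rw [inv_one_sub_eq a ha]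
  intro n
  rw [PowerSeries.coeff_mk]
  split <;> norm_num

lemma inv_prod (ι : Type*) (s : Finset ι) (f : ι → ℚ⟦X⟧) :
    (∏ l ∈ s, f l)⁻¹ = ∏ l ∈ s, (f l)⁻¹ := by
  classical
  induction s using Finset.induction_on with
  | empty => simp
  | insert _ _ hx ih =>
    rw [Finset.prod_insert hx, Finset.prod_insert hx, PowerSeries.mul_inv_rev, ih, mul_comm]

lemma geom_identity (a k : ℕ) :
    (1 - (X : ℚ⟦X⟧) ^ (k * a)) = (1 - X ^ a) * ∑ j ∈ range k, ((X : ℚ⟦X⟧) ^ a) ^ j := by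
  have := geom_sum_mul ((X : ℚ⟦X⟧) ^ a) k
  rw [show (X : ℚ⟦X⟧) ^ (k * a) = ((X : ℚ⟦X⟧) ^ a) ^ k from pow_mul' X k a]
  linear_combination this

lemma pos_add_right {a b : ℕ} (h : 0 < a) : 0 < a + b := by omega
lemma pos_add_left {a b : ℕ} (h : 0 < b) : 0 < a + b := by omega

lemma NN.prod_inv (N : ℕ) (e : ℕ → ℕ) (he : ∀ l, 0 < e l) :
    NN (∏ l ∈ range N, (1 - (X : ℚ⟦X⟧) ^ (e l))⁻¹) :=
  NN.prod _ _ fun l _ => NN.inv_one_sub _ (he l)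

lemma W_case_succ (x y r R m L : ℕ) (hx : 0 < x) (hy : 0 < y)
    (hr : 0 < r) (hR : 0 < R) (hm : 0 < m) (t : ℕ) (hiL : t + 1 + 1 ≤ L) (n : ℕ) :
    0 ≤ PowerSeries.coeff (R := ℚ) n
      ((X : ℚ⟦X⟧) ^ (m * (t+1) + x) * (1 - X ^ ((r - 1) * x)) * (1 - X ^ (R * y)) *
          (1 - X ^ (m * (t+1) + y)) *
        ((∏ l ∈ range (t+1+1), (1 - (X : ℚ⟦X⟧) ^ (x + l * m))) *
         (∏ l ∈ range (t+1+1), (1 - (X : ℚ⟦X⟧) ^ (y + l * m))) *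
         (∏ l ∈ range (t+1+1), (1 - (X : ℚ⟦X⟧) ^ (r * x + R * y + l * m))))⁻¹ *
        ((∏ l ∈ range (L - (t+1+1) + 1), (1 - (X : ℚ⟦X⟧) ^ (m * (t+1) + r * x + l * m))) *
         (∏ l ∈ range (L - (t+1+1) + 1), (1 - (X : ℚ⟦X⟧) ^ (m * (t+1) + R * y + l * m))) *
         (∏ l ∈ range (L - (t+1+1) + 1), (1 - (X : ℚ⟦X⟧) ^ (m * (t+1) + x + y + l * m))))⁻¹) := by
  simp only [PowerSeries.mul_inv_rev, inv_prod]
  have hA : (∏ l ∈ range (t+1+1), (1 - (X : ℚ⟦X⟧) ^ (x + l * m))⁻¹)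
      = (∏ l ∈ range (t+1), (1 - (X : ℚ⟦X⟧) ^ (x + (l+1) * m))⁻¹)
        * (1 - (X : ℚ⟦X⟧) ^ (x + 0 * m))⁻¹ := Finset.prod_range_succ' _ _
  have hB : (∏ l ∈ range (t+1+1), (1 - (X : ℚ⟦X⟧) ^ (y + l * m))⁻¹)
      = ((∏ l ∈ range t, (1 - (X : ℚ⟦X⟧) ^ (y + (l+1) * m))⁻¹)
          * (1 - (X : ℚ⟦X⟧) ^ (y + 0 * m))⁻¹)
        * (1 - (X : ℚ⟦X⟧) ^ (y + (t+1) * m))⁻¹ := by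
    rw [Finset.prod_range_succ, Finset.prod_range_succ' (fun l => (1 - (X : ℚ⟦X⟧) ^ (y + l * m))⁻¹)]
  simp only [zero_mul, add_zero] at hA hB
  rw [hA, hB]
  have c1 : (1 - (X : ℚ⟦X⟧) ^ x) * (1 - (X : ℚ⟦X⟧) ^ x)⁻¹ = 1 := cancel_one_sub x hx
  have c2 : (1 - (X : ℚ⟦X⟧) ^ y) * (1 - (X : ℚ⟦X⟧) ^ y)⁻¹ = 1 := cancel_one_sub y hy
  have c3 : (1 - (X : ℚ⟦X⟧) ^ (m * (t+1) + y)) * (1 - (X : ℚ⟦X⟧) ^ (y + (t+1) * m))⁻¹ = 1 := by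
    rw [show y + (t+1) * m = m * (t+1) + y by ring]
    exact cancel_one_sub _ (pos_add_left hy)
  have hg1 : (1 - (X : ℚ⟦X⟧) ^ ((r-1) * x))
      = (1 - X ^ x) * ∑ j ∈ range (r-1), ((X : ℚ⟦X⟧) ^ x) ^ j := geom_identity x (r-1)
  have hg2 : (1 - (X : ℚ⟦X⟧) ^ (R * y))
      = (1 - X ^ y) * ∑ j ∈ range R, ((X : ℚ⟦X⟧) ^ y) ^ j := geom_identity y R
  have hNN : NN ((X : ℚ⟦X⟧) ^ (m * (t+1) + x)
    * (∑ j ∈ range (r-1), ((X : ℚ⟦X⟧) ^ x) ^ j)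
    * (∑ j ∈ range R, ((X : ℚ⟦X⟧) ^ y) ^ j)
    * (∏ l ∈ range (t+1), (1 - (X : ℚ⟦X⟧) ^ (x + (l+1) * m))⁻¹)
    * (∏ l ∈ range t, (1 - (X : ℚ⟦X⟧) ^ (y + (l+1) * m))⁻¹)
    * (∏ l ∈ range (t+1+1), (1 - (X : ℚ⟦X⟧) ^ (r * x + R * y + l * m))⁻¹)
    * (∏ l ∈ range (L - (t+1+1) + 1), (1 - (X : ℚ⟦X⟧) ^ (m * (t+1) + r * x + l * m))⁻¹)
    * (∏ l ∈ range (L - (t+1+1) + 1), (1 - (X : ℚ⟦X⟧) ^ (m * (t+1) + R * y + l * m))⁻¹)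
    * (∏ l ∈ range (L - (t+1+1) + 1), (1 - (X : ℚ⟦X⟧) ^ (m * (t+1) + x + y + l * m))⁻¹)) := by
    refine ((((((((NN.X_pow _).mul (NN.geom _ _)).mul (NN.geom _ _)).mul
      (NN.prod_inv _ _ fun l => pos_add_right hx)).mul
      (NN.prod_inv _ _ fun l => pos_add_right hy)).mul
      (NN.prod_inv _ _ fun l => pos_add_right (pos_add_right (Nat.mul_pos hr hx)))).mul
      (NN.prod_inv _ _ fun l => pos_add_right (pos_add_left (Nat.mul_pos hr hx)))).mul
      (NN.prod_inv _ _ fun l => pos_add_right (pos_add_left (Nat.mul_pos hR hy)))).mul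
      (NN.prod_inv _ _ fun l => pos_add_right (pos_add_right (pos_add_left hx)))
  convert hNN n using 2
  rw [hg1, hg2]
  linear_combination
    (((X : ℚ⟦X⟧) ^ (m * (t+1) + x)
    * (∑ j ∈ range (r-1), ((X : ℚ⟦X⟧) ^ x) ^ j)
    * (∑ j ∈ range R, ((X : ℚ⟦X⟧) ^ y) ^ j)
    * (∏ l ∈ range (t+1), (1 - (X : ℚ⟦X⟧) ^ (x + (l+1) * m))⁻¹)
    * (∏ l ∈ range t, (1 - (X : ℚ⟦X⟧) ^ (y + (l+1) * m))⁻¹)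
    * (∏ l ∈ range (t+1+1), (1 - (X : ℚ⟦X⟧) ^ (r * x + R * y + l * m))⁻¹)
    * (∏ l ∈ range (L - (t+1+1) + 1), (1 - (X : ℚ⟦X⟧) ^ (m * (t+1) + r * x + l * m))⁻¹)
    * (∏ l ∈ range (L - (t+1+1) + 1), (1 - (X : ℚ⟦X⟧) ^ (m * (t+1) + R * y + l * m))⁻¹)
    * (∏ l ∈ range (L - (t+1+1) + 1), (1 - (X : ℚ⟦X⟧) ^ (m * (t+1) + x + y + l * m))⁻¹))
      * ((1 - (X : ℚ⟦X⟧) ^ y) * (1 - (X : ℚ⟦X⟧) ^ y)⁻¹)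
      * ((1 - (X : ℚ⟦X⟧) ^ (m * (t+1) + y)) * (1 - (X : ℚ⟦X⟧) ^ (y + (t+1) * m))⁻¹)) * c1
    + (((X : ℚ⟦X⟧) ^ (m * (t+1) + x)
    * (∑ j ∈ range (r-1), ((X : ℚ⟦X⟧) ^ x) ^ j)
    * (∑ j ∈ range R, ((X : ℚ⟦X⟧) ^ y) ^ j)
    * (∏ l ∈ range (t+1), (1 - (X : ℚ⟦X⟧) ^ (x + (l+1) * m))⁻¹)
    * (∏ l ∈ range t, (1 - (X : ℚ⟦X⟧) ^ (y + (l+1) * m))⁻¹)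
    * (∏ l ∈ range (t+1+1), (1 - (X : ℚ⟦X⟧) ^ (r * x + R * y + l * m))⁻¹)
    * (∏ l ∈ range (L - (t+1+1) + 1), (1 - (X : ℚ⟦X⟧) ^ (m * (t+1) + r * x + l * m))⁻¹)
    * (∏ l ∈ range (L - (t+1+1) + 1), (1 - (X : ℚ⟦X⟧) ^ (m * (t+1) + R * y + l * m))⁻¹)
    * (∏ l ∈ range (L - (t+1+1) + 1), (1 - (X : ℚ⟦X⟧) ^ (m * (t+1) + x + y + l * m))⁻¹))
      * ((1 - (X : ℚ⟦X⟧) ^ (m * (t+1) + y)) * (1 - (X : ℚ⟦X⟧) ^ (y + (t+1) * m))⁻¹)) * c2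
    + ((X : ℚ⟦X⟧) ^ (m * (t+1) + x)
    * (∑ j ∈ range (r-1), ((X : ℚ⟦X⟧) ^ x) ^ j)
    * (∑ j ∈ range R, ((X : ℚ⟦X⟧) ^ y) ^ j)
    * (∏ l ∈ range (t+1), (1 - (X : ℚ⟦X⟧) ^ (x + (l+1) * m))⁻¹)
    * (∏ l ∈ range t, (1 - (X : ℚ⟦X⟧) ^ (y + (l+1) * m))⁻¹)
    * (∏ l ∈ range (t+1+1), (1 - (X : ℚ⟦X⟧) ^ (r * x + R * y + l * m))⁻¹)
    * (∏ l ∈ range (L - (t+1+1) + 1), (1 - (X : ℚ⟦X⟧) ^ (m * (t+1) + r * x + l * m))⁻¹)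
    * (∏ l ∈ range (L - (t+1+1) + 1), (1 - (X : ℚ⟦X⟧) ^ (m * (t+1) + R * y + l * m))⁻¹)
    * (∏ l ∈ range (L - (t+1+1) + 1), (1 - (X : ℚ⟦X⟧) ^ (m * (t+1) + x + y + l * m))⁻¹)) * c3

lemma W_case_zero (x y r R m L : ℕ) (hx : 0 < x) (hy : 0 < y)
    (hr : 0 < r) (hR : 0 < R) (hm : 0 < m) (hiL : 0 + 1 ≤ L) (n : ℕ) :
    0 ≤ PowerSeries.coeff (R := ℚ) n
      ((X : ℚ⟦X⟧) ^ (m * 0 + x) * (1 - X ^ ((r - 1) * x)) * (1 - X ^ (R * y)) *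
          (1 - X ^ (m * 0 + y)) *
        ((∏ l ∈ range (0+1), (1 - (X : ℚ⟦X⟧) ^ (x + l * m))) *
         (∏ l ∈ range (0+1), (1 - (X : ℚ⟦X⟧) ^ (y + l * m))) *
         (∏ l ∈ range (0+1), (1 - (X : ℚ⟦X⟧) ^ (r * x + R * y + l * m))))⁻¹ *
        ((∏ l ∈ range (L - (0+1) + 1), (1 - (X : ℚ⟦X⟧) ^ (m * 0 + r * x + l * m))) *
         (∏ l ∈ range (L - (0+1) + 1), (1 - (X : ℚ⟦X⟧) ^ (m * 0 + R * y + l * m))) *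
         (∏ l ∈ range (L - (0+1) + 1), (1 - (X : ℚ⟦X⟧) ^ (m * 0 + x + y + l * m))))⁻¹) := by
  simp only [mul_zero, zero_add, zero_mul, add_zero, prod_range_one,
    PowerSeries.mul_inv_rev, inv_prod]
  have hQ : (∏ l ∈ range (L - 1 + 1), (1 - (X : ℚ⟦X⟧) ^ (R * y + l * m))⁻¹)
      = (∏ l ∈ range (L - 1), (1 - (X : ℚ⟦X⟧) ^ (R * y + (l+1) * m))⁻¹)
        * (1 - (X : ℚ⟦X⟧) ^ (R * y + 0 * m))⁻¹ := Finset.prod_range_succ' _ _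
  simp only [zero_mul, add_zero] at hQ
  rw [hQ]
  have c1 : (1 - (X : ℚ⟦X⟧) ^ x) * (1 - (X : ℚ⟦X⟧) ^ x)⁻¹ = 1 := cancel_one_sub x hx
  have c2 : (1 - (X : ℚ⟦X⟧) ^ (R * y)) * (1 - (X : ℚ⟦X⟧) ^ (R * y))⁻¹ = 1 :=
    cancel_one_sub _ (Nat.mul_pos hR hy)
  have c3 : (1 - (X : ℚ⟦X⟧) ^ y) * (1 - (X : ℚ⟦X⟧) ^ y)⁻¹ = 1 := cancel_one_sub y hy
  have hg1 : (1 - (X : ℚ⟦X⟧) ^ ((r-1) * x))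
      = (1 - X ^ x) * ∑ j ∈ range (r-1), ((X : ℚ⟦X⟧) ^ x) ^ j := geom_identity x (r-1)
  have hNN : NN ((X : ℚ⟦X⟧) ^ x
    * (∑ j ∈ range (r-1), ((X : ℚ⟦X⟧) ^ x) ^ j)
    * (1 - (X : ℚ⟦X⟧) ^ (r * x + R * y))⁻¹
    * (∏ l ∈ range (L - 1 + 1), (1 - (X : ℚ⟦X⟧) ^ (r * x + l * m))⁻¹)
    * (∏ l ∈ range (L - 1), (1 - (X : ℚ⟦X⟧) ^ (R * y + (l+1) * m))⁻¹)
    * (∏ l ∈ range (L - 1 + 1), (1 - (X : ℚ⟦X⟧) ^ (x + y + l * m))⁻¹)) := by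
    refine (((((NN.X_pow _).mul (NN.geom _ _)).mul
      (NN.inv_one_sub _ (pos_add_right (Nat.mul_pos hr hx)))).mul
      (NN.prod_inv _ _ fun l => pos_add_right (Nat.mul_pos hr hx))).mul
      (NN.prod_inv _ _ fun l => pos_add_right (Nat.mul_pos hR hy))).mul
      (NN.prod_inv _ _ fun l => pos_add_right (pos_add_right hx))
  convert hNN n using 2
  rw [hg1]
  linear_combination
    (((X : ℚ⟦X⟧) ^ x
    * (∑ j ∈ range (r-1), ((X : ℚ⟦X⟧) ^ x) ^ j)
    * (1 - (X : ℚ⟦X⟧) ^ (r * x + R * y))⁻¹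
    * (∏ l ∈ range (L - 1 + 1), (1 - (X : ℚ⟦X⟧) ^ (r * x + l * m))⁻¹)
    * (∏ l ∈ range (L - 1), (1 - (X : ℚ⟦X⟧) ^ (R * y + (l+1) * m))⁻¹)
    * (∏ l ∈ range (L - 1 + 1), (1 - (X : ℚ⟦X⟧) ^ (x + y + l * m))⁻¹))
      * ((1 - (X : ℚ⟦X⟧) ^ (R * y)) * (1 - (X : ℚ⟦X⟧) ^ (R * y))⁻¹)
      * ((1 - (X : ℚ⟦X⟧) ^ y) * (1 - (X : ℚ⟦X⟧) ^ y)⁻¹)) * c1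
    + (((X : ℚ⟦X⟧) ^ x
    * (∑ j ∈ range (r-1), ((X : ℚ⟦X⟧) ^ x) ^ j)
    * (1 - (X : ℚ⟦X⟧) ^ (r * x + R * y))⁻¹
    * (∏ l ∈ range (L - 1 + 1), (1 - (X : ℚ⟦X⟧) ^ (r * x + l * m))⁻¹)
    * (∏ l ∈ range (L - 1), (1 - (X : ℚ⟦X⟧) ^ (R * y + (l+1) * m))⁻¹)
    * (∏ l ∈ range (L - 1 + 1), (1 - (X : ℚ⟦X⟧) ^ (x + y + l * m))⁻¹))
      * ((1 - (X : ℚ⟦X⟧) ^ y) * (1 - (X : ℚ⟦X⟧) ^ y)⁻¹)) * c2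
    + ((X : ℚ⟦X⟧) ^ x
    * (∑ j ∈ range (r-1), ((X : ℚ⟦X⟧) ^ x) ^ j)
    * (1 - (X : ℚ⟦X⟧) ^ (r * x + R * y))⁻¹
    * (∏ l ∈ range (L - 1 + 1), (1 - (X : ℚ⟦X⟧) ^ (r * x + l * m))⁻¹)
    * (∏ l ∈ range (L - 1), (1 - (X : ℚ⟦X⟧) ^ (R * y + (l+1) * m))⁻¹)
    * (∏ l ∈ range (L - 1 + 1), (1 - (X : ℚ⟦X⟧) ^ (x + y + l * m))⁻¹)) * c3

theorem W_nonneg (x y r R m L i : ℕ) (hx : 0 < x) (hy : 0 < y)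
    (hr : 0 < r) (hR : 0 < R) (hm : 0 < m) (hi : 1 ≤ i) (hiL : i ≤ L) (n : ℕ) :
    0 ≤ PowerSeries.coeff (R := ℚ) n
      ((X : ℚ⟦X⟧) ^ (m * (i - 1) + x) * (1 - X ^ ((r - 1) * x)) * (1 - X ^ (R * y)) *
          (1 - X ^ (m * (i - 1) + y)) *
        ((∏ l ∈ range i, (1 - (X : ℚ⟦X⟧) ^ (x + l * m))) *
         (∏ l ∈ range i, (1 - (X : ℚ⟦X⟧) ^ (y + l * m))) *
         (∏ l ∈ range i, (1 - (X : ℚ⟦X⟧) ^ (r * x + R * y + l * m))))⁻¹ *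
        ((∏ l ∈ range (L - i + 1), (1 - (X : ℚ⟦X⟧) ^ (m * (i - 1) + r * x + l * m))) *
         (∏ l ∈ range (L - i + 1), (1 - (X : ℚ⟦X⟧) ^ (m * (i - 1) + R * y + l * m))) *
         (∏ l ∈ range (L - i + 1), (1 - (X : ℚ⟦X⟧) ^ (m * (i - 1) + x + y + l * m))))⁻¹) := by
  obtain ⟨s, rfl⟩ : ∃ s, i = s + 1 := ⟨i - 1, (Nat.succ_pred_eq_of_pos hi).symm⟩
  simp only [Nat.add_sub_cancel]
  rcases s with _ | t
  · exact W_case_zero x y r R m L hx hy hr hR hm hiL n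
  · exact W_case_succ x y r R m L hx hy hr hR hm t hiL n
end
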